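/- arXiv:2308.12016 — 2 statements merged into one kernel-verified Lean document; each statement's English description precedes it below -/
import Mathlib

section
/- (Theorem 4, part 2: P-stationary points are local minimizers.) Suppose (w*, d*, b*, u*) is a P-stationary point with some parameter γ > 0. Then (w*, d*, b*, u*) is a local minimizer of the constrained problem: minimize (1/2) wᵀ 𝒦(d) w + C‖u₊‖₀ over (w, d, b, u) ∈ ℝ^m × ℝ^L × ℝ × ℝ^m subject to d ∈ Δ and u + 𝒜(d) w + b y = 1. That is, (w*, d*, b*, u*) is feasible and there exists δ > 0 such that for all feasible (w, d, b, u) with ‖(w, d, b, u) − (w*, d*, b*, u*)‖ < δ one has (1/2) w*ᵀ 𝒦(d*) w* + C‖u*₊‖₀ ≤ (1/2) wᵀ 𝒦(d) w + C‖u₊‖₀. -/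
open Matrix

/-- `‖v₊‖₀`: the number of strictly positive components of `v`, as a real number. -/
noncomputable def l0pos {m : ℕ} (v : Fin m → ℝ) : ℝ :=
  ((Finset.univ.filter (fun i => 0 < v i)).card : ℝ)

/-- The conditions for `(w, d, b, u)` to be a P-stationary point with parameter `γ > 0`,
with explicitly given multipliers `(θ, α, lam)`. -/
def IsPStationaryWith {m L : ℕ} (K : Fin L → Matrix (Fin m) (Fin m) ℝ)
    (y : Fin m → ℝ) (C γ : ℝ)
    (w : Fin m → ℝ) (d : Fin L → ℝ) (b : ℝ) (u : Fin m → ℝ)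
    (θ : Fin L → ℝ) (α : ℝ) (lam : Fin m → ℝ) : Prop :=
  (∀ ℓ, 0 ≤ d ℓ) ∧
  (∑ ℓ, d ℓ) = 1 ∧
  (∀ ℓ, 0 ≤ θ ℓ) ∧
  (∀ ℓ, θ ℓ * d ℓ = 0) ∧
  u + (Matrix.diagonal y * ∑ ℓ, d ℓ • K ℓ).mulVec w + b • y = 1 ∧
  w + (Matrix.diagonal y).mulVec lam = 0 ∧
  (∀ ℓ, -(1 / 2) * (w ⬝ᵥ (K ℓ).mulVec w) + α - θ ℓ = 0) ∧
  y ⬝ᵥ lam = 0 ∧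
  ∀ v : Fin m → ℝ,
    C * l0pos u + (1 / (2 * γ)) * ∑ i, (u i - (u i - γ * lam i)) ^ 2 ≤
    C * l0pos v + (1 / (2 * γ)) * ∑ i, (v i - (u i - γ * lam i)) ^ 2

/-- `(w, d, b, u)` is a P-stationary point with parameter `γ > 0`. -/
def IsPStationary {m L : ℕ} (K : Fin L → Matrix (Fin m) (Fin m) ℝ)
    (y : Fin m → ℝ) (C γ : ℝ)
    (w : Fin m → ℝ) (d : Fin L → ℝ) (b : ℝ) (u : Fin m → ℝ) : Prop :=
  ∃ (θ : Fin L → ℝ) (α : ℝ) (lam : Fin m → ℝ),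
    IsPStationaryWith K y C γ w d b u θ α lam

/- ### Auxiliary lemmas -/

lemma l0pos_eq_sum {m : ℕ} (v : Fin m → ℝ) :
    l0pos v = ∑ i, if 0 < v i then (1 : ℝ) else 0 := by
  rw [l0pos, Finset.card_filter]
  push_cast
  exact Finset.sum_congr rfl fun i _ => by split <;> simp

lemma sum_update_eq {m : ℕ} (g : Fin m → ℝ → ℝ) (u : Fin m → ℝ) (i : Fin m) (t : ℝ) :
    ∑ j, g j (Function.update u i t j) = (∑ j, g j (u j)) - g i (u i) + g i t := by
  rw [← Finset.sum_erase_add _ (fun j => g j (Function.update u i t j)) (Finset.mem_univ i),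
    ← Finset.sum_erase_add _ (fun j => g j (u j)) (Finset.mem_univ i)]
  have h : ∑ j ∈ Finset.univ.erase i, g j (Function.update u i t j)
      = ∑ j ∈ Finset.univ.erase i, g j (u j) :=
    Finset.sum_congr rfl fun j hj => by
      rw [Function.update_of_ne (Finset.ne_of_mem_erase hj)]
  rw [h, Function.update_self]
  ring

lemma quad_expand {m L : ℕ} (K : Fin L → Matrix (Fin m) (Fin m) ℝ) (d : Fin L → ℝ)
    (a b : Fin m → ℝ) :
    a ⬝ᵥ (∑ ℓ, d ℓ • K ℓ).mulVec b = ∑ ℓ, d ℓ * (a ⬝ᵥ (K ℓ).mulVec b) := by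
  have h1 : (∑ ℓ, d ℓ • K ℓ) *ᵥ b = ∑ ℓ, d ℓ • ((K ℓ) *ᵥ b) := by
    ext i
    simp [Matrix.mulVec, dotProduct, Matrix.sum_apply, Finset.sum_apply, Finset.sum_mul]
    rw [Finset.sum_comm]
    exact Finset.sum_congr rfl fun ℓ _ => by
      rw [Finset.mul_sum]; exact Finset.sum_congr rfl fun j _ => by ring
  rw [h1]
  simp only [dotProduct, Finset.sum_apply, Pi.smul_apply, smul_eq_mul, Finset.mul_sum]
  rw [Finset.sum_comm]
  exact Finset.sum_congr rfl fun ℓ _ => Finset.sum_congr rfl fun i _ => by ring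

set_option maxHeartbeats 2000000 in
/-- Theorem 4, part 2: any P-stationary point (with `γ > 0`) is a local minimizer of
the constrained MKL-L₀/₁-SVM problem. -/
theorem stmt_8 (m L : ℕ) (hm : 1 ≤ m) (hL : 1 ≤ L)
    (y : Fin m → ℝ) (hy : ∀ i, y i = 1 ∨ y i = -1)
    (K : Fin L → Matrix (Fin m) (Fin m) ℝ) (hK : ∀ ℓ, (K ℓ).PosDef)
    (C : ℝ) (hC : 0 < C)
    (Feasible : (Fin m → ℝ) × (Fin L → ℝ) × ℝ × (Fin m → ℝ) → Prop)
    (hFeasible : ∀ (w : Fin m → ℝ) (d : Fin L → ℝ) (b : ℝ) (u : Fin m → ℝ),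
      Feasible (w, d, b, u) ↔
        (∀ ℓ, 0 ≤ d ℓ) ∧ (∑ ℓ, d ℓ) = 1 ∧
        u + (Matrix.diagonal y * ∑ ℓ, d ℓ • K ℓ).mulVec w + b • y = 1)
    (wstar : Fin m → ℝ) (dstar : Fin L → ℝ) (bstar : ℝ) (ustar : Fin m → ℝ)
    (γ : ℝ) (hγ : 0 < γ)
    (hP : IsPStationary K y C γ wstar dstar bstar ustar) :
    Feasible (wstar, dstar, bstar, ustar) ∧
    ∃ δ > 0, ∀ (w : Fin m → ℝ) (d : Fin L → ℝ) (b : ℝ) (u : Fin m → ℝ),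
      Feasible (w, d, b, u) →
      dist ((w, d, b, u) : (Fin m → ℝ) × (Fin L → ℝ) × ℝ × (Fin m → ℝ))
        (wstar, dstar, bstar, ustar) < δ →
      (1 / 2) * (wstar ⬝ᵥ (∑ ℓ, dstar ℓ • K ℓ).mulVec wstar) + C * l0pos ustar ≤
      (1 / 2) * (w ⬝ᵥ (∑ ℓ, d ℓ • K ℓ).mulVec w) + C * l0pos u := by
  obtain ⟨θ, α, lam, hd0s, hd1s, hθ0, hθd, hcons, hwlam, hKKT, hylam, hprox⟩ := hP
  -- basic symmetric / PSD facts
  have hsymone : ∀ (ℓ : Fin L) (a b : Fin m → ℝ),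
      a ⬝ᵥ (K ℓ).mulVec b = b ⬝ᵥ (K ℓ).mulVec a := by
    intro ℓ a b
    rw [dotProduct_mulVec, ← Matrix.mulVec_transpose,
      show (K ℓ)ᵀ = K ℓ from by simpa using (hK ℓ).isHermitian.eq]
    exact dotProduct_comm _ _
  have hsymK : ∀ (d : Fin L → ℝ) (a b : Fin m → ℝ),
      a ⬝ᵥ (∑ ℓ, d ℓ • K ℓ).mulVec b = b ⬝ᵥ (∑ ℓ, d ℓ • K ℓ).mulVec a := by
    intro d a b
    rw [quad_expand, quad_expand]
    exact Finset.sum_congr rfl fun ℓ _ => by rw [hsymone ℓ a b]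
  have hpsd : ∀ (d : Fin L → ℝ), (∀ ℓ, 0 ≤ d ℓ) → ∀ v : Fin m → ℝ,
      0 ≤ v ⬝ᵥ (∑ ℓ, d ℓ • K ℓ).mulVec v := by
    intro d hd v
    rw [quad_expand]
    exact Finset.sum_nonneg fun ℓ _ => mul_nonneg (hd ℓ) ((hK ℓ).posSemidef.dotProduct_mulVec_nonneg v)
  -- wstar in terms of lam
  have hwl : ∀ i, y i * lam i = -(wstar i) := by
    intro i
    have h := congrFun hwlam i
    simp only [Pi.add_apply, Pi.zero_apply, Matrix.mulVec_diagonal] at h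
    linarith
  -- constraint dotted with lam
  have hfeas_dot : ∀ (d : Fin L → ℝ) (w : Fin m → ℝ) (b : ℝ) (u : Fin m → ℝ),
      u + (Matrix.diagonal y * ∑ ℓ, d ℓ • K ℓ).mulVec w + b • y = 1 →
      lam ⬝ᵥ u = wstar ⬝ᵥ (∑ ℓ, d ℓ • K ℓ).mulVec w + ∑ i, lam i := by
    intro d w b u hc
    have h := congrArg (fun z => lam ⬝ᵥ z) hc
    simp only [dotProduct_add] at h
    rw [dotProduct_one] at h
    have h2 : lam ⬝ᵥ (Matrix.diagonal y * ∑ ℓ, d ℓ • K ℓ).mulVec w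
        = -(wstar ⬝ᵥ (∑ ℓ, d ℓ • K ℓ).mulVec w) := by
      rw [← Matrix.mulVec_mulVec]
      simp only [dotProduct, Matrix.mulVec_diagonal]
      rw [← Finset.sum_neg_distrib]
      exact Finset.sum_congr rfl fun i _ => by
        linear_combination (((∑ ℓ, d ℓ • K ℓ) *ᵥ w) i) * hwl i
    have h3 : lam ⬝ᵥ (b • y) = 0 := by
      rw [dotProduct_smul, dotProduct_comm, hylam]
      simp
    rw [h2, h3] at h
    linarith
  -- quadratic form values at wstar
  have hq1 : ∀ ℓ, wstar ⬝ᵥ (K ℓ).mulVec wstar = 2 * (α - θ ℓ) := by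
    intro ℓ; have := hKKT ℓ; linarith
  have hqd : ∀ (d : Fin L → ℝ), (∑ ℓ, d ℓ) = 1 →
      wstar ⬝ᵥ (∑ ℓ, d ℓ • K ℓ).mulVec wstar = 2 * α - 2 * ∑ ℓ, d ℓ * θ ℓ := by
    intro d hd1
    rw [quad_expand]
    have h : ∀ ℓ ∈ Finset.univ, d ℓ * (wstar ⬝ᵥ (K ℓ).mulVec wstar)
        = 2 * α * d ℓ - 2 * (d ℓ * θ ℓ) := fun ℓ _ => by rw [hq1 ℓ]; ring
    rw [Finset.sum_congr rfl h, Finset.sum_sub_distrib, ← Finset.mul_sum, ← Finset.mul_sum, hd1]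
    ring
  have hdθstar : ∑ ℓ, dstar ℓ * θ ℓ = 0 :=
    Finset.sum_eq_zero fun ℓ _ => by rw [mul_comm]; exact hθd ℓ
  have hqdstar : wstar ⬝ᵥ (∑ ℓ, dstar ℓ • K ℓ).mulVec wstar = 2 * α := by
    rw [hqd dstar hd1s, hdθstar]; ring
  -- componentwise prox inequality
  have key : ∀ (i : Fin m) (t : ℝ),
      C * (if 0 < ustar i then (1 : ℝ) else 0) + (1 / (2 * γ)) * (γ * lam i) ^ 2 ≤
      C * (if 0 < t then (1 : ℝ) else 0)
        + (1 / (2 * γ)) * (t - (ustar i - γ * lam i)) ^ 2 := by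
    intro i t
    have h := hprox (Function.update ustar i t)
    rw [l0pos_eq_sum, l0pos_eq_sum] at h
    have e1 : ∑ j, (if 0 < Function.update ustar i t j then (1 : ℝ) else 0)
        = (∑ j, if 0 < ustar j then (1 : ℝ) else 0)
          - (if 0 < ustar i then (1 : ℝ) else 0) + (if 0 < t then (1 : ℝ) else 0) :=
      sum_update_eq (fun _ s => if 0 < s then (1 : ℝ) else 0) ustar i t
    have e2 : ∑ j, (Function.update ustar i t j - (ustar j - γ * lam j)) ^ 2
        = (∑ j, (ustar j - (ustar j - γ * lam j)) ^ 2)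
          - (ustar i - (ustar i - γ * lam i)) ^ 2 + (t - (ustar i - γ * lam i)) ^ 2 :=
      sum_update_eq (fun j s => (s - (ustar j - γ * lam j)) ^ 2) ustar i t
    rw [e1, e2] at h
    have e3 : (ustar i - (ustar i - γ * lam i)) ^ 2 = (γ * lam i) ^ 2 := by ring
    rw [e3] at h
    nlinarith [h]
  have key2 : ∀ (i : Fin m) (t : ℝ),
      2 * γ * (C * (if 0 < ustar i then (1 : ℝ) else 0)) + (γ * lam i) ^ 2 ≤
      2 * γ * (C * (if 0 < t then (1 : ℝ) else 0)) + (t - (ustar i - γ * lam i)) ^ 2 := by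
    intro i t
    have h := key i t
    have h' := mul_le_mul_of_nonneg_left h (by positivity : (0:ℝ) ≤ 2 * γ)
    have hγ' : γ ≠ 0 := ne_of_gt hγ
    have e1 : 2 * γ * (C * (if 0 < ustar i then (1 : ℝ) else 0)
        + 1 / (2 * γ) * (γ * lam i) ^ 2)
        = 2 * γ * (C * (if 0 < ustar i then (1 : ℝ) else 0)) + (γ * lam i) ^ 2 := by
      field_simp
    have e2 : 2 * γ * (C * (if 0 < t then (1 : ℝ) else 0)
        + 1 / (2 * γ) * (t - (ustar i - γ * lam i)) ^ 2)
        = 2 * γ * (C * (if 0 < t then (1 : ℝ) else 0))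
          + (t - (ustar i - γ * lam i)) ^ 2 := by
      field_simp
    linarith [h', e1, e2]
  -- consequences for lam
  have hlamfacts : ∀ i, lam i ≠ 0 → ustar i = 0 ∧ lam i < 0 ∧ γ * (lam i) ^ 2 ≤ 2 * C := by
    intro i hne
    have hpos : 0 < (γ * lam i) ^ 2 := by positivity
    have k1 := key2 i (ustar i - γ * lam i)
    have hz : (ustar i - γ * lam i - (ustar i - γ * lam i)) ^ 2 = 0 := by ring
    rw [hz] at k1
    have hcu : ¬ (0 < ustar i) := by
      intro hcu
      rw [if_pos hcu] at k1
      by_cases hct : 0 < ustar i - γ * lam i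
      · rw [if_pos hct] at k1; nlinarith
      · rw [if_neg hct] at k1; nlinarith
    have hct : 0 < ustar i - γ * lam i := by
      by_contra hct
      rw [if_neg hcu, if_neg hct] at k1
      nlinarith
    rw [if_neg hcu, if_pos hct] at k1
    have hle : ustar i ≤ 0 := not_lt.1 hcu
    have hlneg : lam i < 0 := by nlinarith
    have hbound : γ * (lam i) ^ 2 ≤ 2 * C := by nlinarith
    have k0 := key2 i 0
    rw [if_neg hcu, if_neg (lt_irrefl (0 : ℝ))] at k0
    have h0 : (γ * lam i) ^ 2 ≤ (0 - (ustar i - γ * lam i)) ^ 2 := by nlinarith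
    have hge : 0 ≤ ustar i := by nlinarith [h0, hle, hct, sq_nonneg (ustar i)]
    exact ⟨le_antisymm hle hge, hlneg, hbound⟩
  -- construction of δ
  have hfeasstar : Feasible (wstar, dstar, bstar, ustar) :=
    (hFeasible wstar dstar bstar ustar).2 ⟨hd0s, hd1s, hcons⟩
  refine ⟨hfeasstar, ?_⟩
  have hmne : (Finset.univ : Finset (Fin m)).Nonempty := ⟨⟨0, hm⟩, Finset.mem_univ _⟩
  set δ₂ : ℝ := Finset.univ.inf' hmne (fun i => if 0 < ustar i then ustar i else 1) with hδ₂
  have hδ₂pos : 0 < δ₂ := by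
    rw [hδ₂, Finset.lt_inf'_iff]
    intro i _
    split
    · assumption
    · norm_num
  have hδ₂le : ∀ i, 0 < ustar i → δ₂ ≤ ustar i := by
    intro i hi
    have h := Finset.inf'_le (fun i => if 0 < ustar i then ustar i else 1) (Finset.mem_univ i)
    rwa [if_pos hi] at h
  set δ : ℝ := min (Real.sqrt (γ * C / 2)) δ₂ with hδdef
  have hδpos : 0 < δ := lt_min (Real.sqrt_pos.2 (by positivity)) hδ₂pos
  refine ⟨δ, hδpos, ?_⟩
  intro w d b u hfeas hdist
  obtain ⟨hd0, hd1, hcon⟩ := (hFeasible w d b u).1 hfeas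
  -- extract the componentwise distance bound on u
  have hui : ∀ i, |u i - ustar i| < δ := by
    intro i
    have h1 : dist (u i) (ustar i) ≤
        dist ((w, d, b, u) : (Fin m → ℝ) × (Fin L → ℝ) × ℝ × (Fin m → ℝ))
          (wstar, dstar, bstar, ustar) := by
      calc dist (u i) (ustar i) ≤ dist u ustar := dist_le_pi_dist u ustar i
        _ ≤ dist ((b, u) : ℝ × (Fin m → ℝ)) (bstar, ustar) := by
            rw [Prod.dist_eq]; exact le_max_right _ _
        _ ≤ dist ((d, b, u) : (Fin L → ℝ) × ℝ × (Fin m → ℝ)) (dstar, bstar, ustar) := by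
            rw [Prod.dist_eq]; exact le_max_right _ _
        _ ≤ _ := by rw [Prod.dist_eq]; exact le_max_right _ _
    rw [← Real.dist_eq]
    exact lt_of_le_of_lt h1 hdist
  -- the "H" componentwise inequality
  have hH : ∀ i, C * (if 0 < ustar i then (1 : ℝ) else 0) + lam i * ustar i ≤
      C * (if 0 < u i then (1 : ℝ) else 0) + lam i * u i := by
    intro i
    have hdi := abs_lt.1 (hui i)
    by_cases hl : lam i = 0
    · rw [hl]
      by_cases hcu : 0 < ustar i
      · have hδle : δ ≤ ustar i := le_trans (min_le_right _ _) (hδ₂le i hcu)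
        have hupos : 0 < u i := by linarith [hdi.1]
        rw [if_pos hcu, if_pos hupos]
        simp
      · rw [if_neg hcu]
        by_cases hcu2 : 0 < u i
        · rw [if_pos hcu2]; nlinarith
        · rw [if_neg hcu2]
          simp
    · obtain ⟨hu0, hlneg, hbound⟩ := hlamfacts i hl
      rw [hu0, if_neg (lt_irrefl (0 : ℝ))]
      by_cases hcu2 : 0 < u i
      · rw [if_pos hcu2]
        have hub : u i < Real.sqrt (γ * C / 2) := by
          have : u i - ustar i < δ := hdi.2
          rw [hu0] at this
          exact lt_of_lt_of_le (by linarith) (min_le_left _ _)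
        have hu2 : (u i) ^ 2 < γ * C / 2 := (Real.lt_sqrt hcu2.le).1 hub
        have h1 : (lam i) ^ 2 * (u i) ^ 2 < C ^ 2 := by
          nlinarith [mul_le_mul_of_nonneg_right hbound (sq_nonneg (u i)),
            mul_lt_mul_of_pos_left hu2 (by positivity : (0:ℝ) < 2 * C)]
        nlinarith [h1, sq_nonneg (C + lam i * u i)]
      · rw [if_neg hcu2]
        nlinarith [mul_nonneg (neg_nonneg.2 hlneg.le) (neg_nonneg.2 (not_lt.1 hcu2))]
  -- summed H inequality
  have hHsum : C * l0pos ustar + lam ⬝ᵥ ustar ≤ C * l0pos u + lam ⬝ᵥ u := by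
    rw [l0pos_eq_sum, l0pos_eq_sum]
    simp only [dotProduct]
    rw [Finset.mul_sum, Finset.mul_sum, ← Finset.sum_add_distrib, ← Finset.sum_add_distrib]
    exact Finset.sum_le_sum fun i _ => hH i
  -- quadratic expansion at w - wstar
  have hquad : (w - wstar) ⬝ᵥ (∑ ℓ, d ℓ • K ℓ).mulVec (w - wstar)
      = w ⬝ᵥ (∑ ℓ, d ℓ • K ℓ).mulVec w
        - 2 * (wstar ⬝ᵥ (∑ ℓ, d ℓ • K ℓ).mulVec w)
        + wstar ⬝ᵥ (∑ ℓ, d ℓ • K ℓ).mulVec wstar := by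
    rw [Matrix.mulVec_sub, dotProduct_sub, sub_dotProduct, sub_dotProduct,
      hsymK d w wstar]
    ring
  have hp1 : 0 ≤ w ⬝ᵥ (∑ ℓ, d ℓ • K ℓ).mulVec w
      - 2 * (wstar ⬝ᵥ (∑ ℓ, d ℓ • K ℓ).mulVec w)
      + wstar ⬝ᵥ (∑ ℓ, d ℓ • K ℓ).mulVec wstar := by
    rw [← hquad]; exact hpsd d hd0 _
  have hp2 : wstar ⬝ᵥ (∑ ℓ, d ℓ • K ℓ).mulVec wstar = 2 * α - 2 * ∑ ℓ, d ℓ * θ ℓ :=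
    hqd d hd1
  have hp3 : 0 ≤ ∑ ℓ, d ℓ * θ ℓ :=
    Finset.sum_nonneg fun ℓ _ => mul_nonneg (hd0 ℓ) (hθ0 ℓ)
  have hp5 : lam ⬝ᵥ u = wstar ⬝ᵥ (∑ ℓ, d ℓ • K ℓ).mulVec w + ∑ i, lam i :=
    hfeas_dot d w b u hcon
  have hp6 : lam ⬝ᵥ ustar
      = wstar ⬝ᵥ (∑ ℓ, dstar ℓ • K ℓ).mulVec wstar + ∑ i, lam i :=
    hfeas_dot dstar wstar bstar ustar hcons
  linarith [hp1, hp2, hp3, hp5, hp6, hHsum, hqdstar]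
end

section
/- Let Q be a symmetric positive definite m×m real matrix, y ∈ ℝ^m with y_i ∈ {−1, 1} for all i, 1 the all-ones vector in ℝ^m, and C > 0. Define g(u, b) = (1/2)(1 − u − b y)ᵀ Q⁻¹ (1 − u − b y). Suppose (u*, b*) ∈ ℝ^m × ℝ is a global minimizer of (u, b) ↦ g(u, b) + C‖u₊‖₀, and set λ* = −Q⁻¹(1 − u* − b* y). Then for every γ with 0 < γ < λ_min(Q), the vector u* is a global minimizer over v ∈ ℝ^m of the function v ↦ C‖v₊‖₀ + (1/(2γ))‖v − (u* − γλ*)‖²; that is, u* = prox_{γC‖(·)₊‖₀}(u* − γλ*). -/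
open Matrix

/-- The smallest eigenvalue of a Hermitian (real symmetric) matrix; junk value `0`
if the matrix is not Hermitian. -/
noncomputable def lambdaMin {m : ℕ} (A : Matrix (Fin m) (Fin m) ℝ) : ℝ :=
  if hA : A.IsHermitian then ⨅ i, hA.eigenvalues i else 0

lemma orth_dot (m : ℕ) (V : Matrix (Fin m) (Fin m) ℝ) (hV : Vᵀ * V = 1)
    (a b : Fin m → ℝ) : (V *ᵥ a) ⬝ᵥ (V *ᵥ b) = a ⬝ᵥ b := by
  rw [Matrix.dotProduct_mulVec, ← Matrix.mulVec_transpose, Matrix.mulVec_mulVec, hV, Matrix.one_mulVec]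

lemma diag_quad (m : ℕ) (Q V : Matrix (Fin m) (Fin m) ℝ) (e : Fin m → ℝ)
    (hUV : Vᵀ * V = 1) (hVU : V * Vᵀ = 1)
    (hspec : Q = V * Matrix.diagonal e * Vᵀ) (x : Fin m → ℝ) :
    ∃ w : Fin m → ℝ,
      x ⬝ᵥ Q *ᵥ x = ∑ i, e i * w i ^ 2 ∧
      x ⬝ᵥ x = ∑ i, w i ^ 2 ∧
      (Q *ᵥ x) ⬝ᵥ (Q *ᵥ x) = ∑ i, (e i) ^ 2 * w i ^ 2 := by
  refine ⟨Vᵀ *ᵥ x, ?_, ?_, ?_⟩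
  · rw [hspec, Matrix.mul_assoc, ← Matrix.mulVec_mulVec, Matrix.dotProduct_mulVec,
      ← Matrix.mulVec_transpose, ← Matrix.mulVec_mulVec]
    simp only [Matrix.mulVec_diagonal, dotProduct]
    congr 1; ext i; ring
  · have := orth_dot m Vᵀ (by rw [Matrix.transpose_transpose]; exact hVU) x x
    rw [← this]
    simp [dotProduct, pow_two]
  · rw [hspec, Matrix.mul_assoc, ← Matrix.mulVec_mulVec, ← Matrix.mulVec_mulVec,
      orth_dot m V hUV]
    simp only [Matrix.mulVec_diagonal, dotProduct]
    congr 1; ext i; ring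

lemma spectral_quad (m : ℕ) (Q : Matrix (Fin m) (Fin m) ℝ) (hQ : Q.IsHermitian) (x : Fin m → ℝ) :
    ∃ w : Fin m → ℝ,
      x ⬝ᵥ Q *ᵥ x = ∑ i, hQ.eigenvalues i * w i ^ 2 ∧
      x ⬝ᵥ x = ∑ i, w i ^ 2 ∧
      (Q *ᵥ x) ⬝ᵥ (Q *ᵥ x) = ∑ i, (hQ.eigenvalues i) ^ 2 * w i ^ 2 := by
  set V : Matrix (Fin m) (Fin m) ℝ := (hQ.eigenvectorUnitary : Matrix (Fin m) (Fin m) ℝ) with hVdef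
  have hVT : star V = Vᵀ := by
    rw [Matrix.star_eq_conjTranspose]; ext i j; simp [Matrix.conjTranspose_apply]
  have hUV : Vᵀ * V = 1 := by
    rw [← hVT]; exact (Matrix.mem_unitaryGroup_iff').mp (hQ.eigenvectorUnitary).2
  have hVU : V * Vᵀ = 1 := by
    rw [← hVT]; exact (Matrix.mem_unitaryGroup_iff).mp (hQ.eigenvectorUnitary).2
  have hspec : Q = V * Matrix.diagonal hQ.eigenvalues * Vᵀ := by
    have := hQ.spectral_theorem
    rw [← hVT]
    rw [Unitary.conjStarAlgAut_apply] at this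
    exact this
  exact diag_quad m Q V hQ.eigenvalues hUV hVU hspec x

noncomputable def lambdaMin' {m : ℕ} (A : Matrix (Fin m) (Fin m) ℝ) : ℝ :=
  if hA : A.IsHermitian then ⨅ i, hA.eigenvalues i else 0

/-- Key inequality: if `0 < γ < λmin Q`, then `d ⬝ᵥ Q⁻¹ d ≤ (1/γ) d⬝d`. -/
lemma inv_quad_bound (m : ℕ) (hm : 1 ≤ m) (Q : Matrix (Fin m) (Fin m) ℝ) (hQ : Q.PosDef)
    (γ : ℝ) (hγ0 : 0 < γ) (hγ : γ < lambdaMin' Q) (d : Fin m → ℝ) :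
    d ⬝ᵥ Q⁻¹ *ᵥ d ≤ (1/γ) * (d ⬝ᵥ d) := by
  have hH : Q.IsHermitian := hQ.isHermitian
  have : Nonempty (Fin m) := ⟨⟨0, hm⟩⟩
  have heig : ∀ i, γ ≤ hH.eigenvalues i := by
    intro i
    have h1 : lambdaMin' Q = ⨅ i, hH.eigenvalues i := by rw [lambdaMin', dif_pos hH]
    have h2 : (⨅ i, hH.eigenvalues i) ≤ hH.eigenvalues i :=
      ciInf_le (Set.Finite.bddBelow (Set.finite_range _)) i
    linarith [hγ, h1 ▸ hγ]
  set e := Q⁻¹ *ᵥ d with he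
  have hdet : IsUnit Q.det := isUnit_iff_ne_zero.mpr (ne_of_gt hQ.det_pos)
  have hQe : Q *ᵥ e = d := by
    rw [he, Matrix.mulVec_mulVec, Matrix.mul_nonsing_inv Q hdet, Matrix.one_mulVec]
  obtain ⟨w, hw1, hw2, hw3⟩ := spectral_quad m Q hH e
  have hdQd : d ⬝ᵥ Q⁻¹ *ᵥ d = e ⬝ᵥ Q *ᵥ e := by
    rw [← he, ← hQe, dotProduct_comm]
  have hdd : d ⬝ᵥ d = (Q *ᵥ e) ⬝ᵥ (Q *ᵥ e) := by rw [hQe]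
  rw [hdQd, hdd, hw1, hw3, Finset.mul_sum]
  apply Finset.sum_le_sum
  intro i _
  have h1 := heig i
  have hw : (0:ℝ) ≤ w i ^ 2 := sq_nonneg _
  rw [div_mul_eq_mul_div, one_mul, le_div_iff₀ hγ0]
  nlinarith [mul_nonneg (mul_nonneg (le_of_lt (lt_of_lt_of_le hγ0 h1)) hw) (sub_nonneg.mpr h1)]

lemma symdot (m : ℕ) (A : Matrix (Fin m) (Fin m) ℝ) (hA : Aᵀ = A) (x z : Fin m → ℝ) :
    x ⬝ᵥ A *ᵥ z = z ⬝ᵥ A *ᵥ x := by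
  rw [Matrix.dotProduct_mulVec, ← Matrix.mulVec_transpose, hA, dotProduct_comm]

/-- A global minimizer `(u*, b*)` of `g(u,b) + C‖u₊‖₀` satisfies the proximal fixed-point
condition `u* = prox_{γC‖(·)₊‖₀}(u* − γλ*)` for every `0 < γ < λ_min(Q)`. -/
theorem stmt_9 (m : ℕ) (hm : 1 ≤ m)
    (Q : Matrix (Fin m) (Fin m) ℝ) (hQ : Q.PosDef)
    (y : Fin m → ℝ) (hy : ∀ i, y i = 1 ∨ y i = -1)
    (C : ℝ) (hC : 0 < C)
    (g : (Fin m → ℝ) → ℝ → ℝ)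
    (hg : ∀ (u : Fin m → ℝ) (b : ℝ),
      g u b = (1 / 2) * ((1 - u - b • y) ⬝ᵥ Q⁻¹.mulVec (1 - u - b • y)))
    (ustar : Fin m → ℝ) (bstar : ℝ)
    (hmin : ∀ (u : Fin m → ℝ) (b : ℝ),
      g ustar bstar + C * l0pos ustar ≤ g u b + C * l0pos u)
    (lamstar : Fin m → ℝ)
    (hlam : lamstar = -(Q⁻¹.mulVec (1 - ustar - bstar • y))) :
    ∀ γ : ℝ, 0 < γ → γ < lambdaMin Q →
      ∀ v : Fin m → ℝ,
        C * l0pos ustar + (1 / (2 * γ)) * ∑ i, (ustar i - (ustar i - γ * lamstar i)) ^ 2 ≤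
        C * l0pos v + (1 / (2 * γ)) * ∑ i, (v i - (ustar i - γ * lamstar i)) ^ 2 := by
  intro γ hγ0 hγlt v
  have hγlt' : γ < lambdaMin' Q := hγlt
  have hAherm : (Q⁻¹).IsHermitian := hQ.isHermitian.inv
  have hAT : (Q⁻¹)ᵀ = Q⁻¹ := by exact_mod_cast hAherm
  set wv : Fin m → ℝ := 1 - ustar - bstar • y with hwv
  set d : Fin m → ℝ := v - ustar with hd
  have hvec : (1 : Fin m → ℝ) - v - bstar • y = wv - d := by
    funext i
    simp only [hwv, hd, Pi.sub_apply, Pi.one_apply, Pi.smul_apply, smul_eq_mul]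
    ring
  have hsymm : d ⬝ᵥ Q⁻¹ *ᵥ wv = wv ⬝ᵥ Q⁻¹ *ᵥ d := symdot m Q⁻¹ hAT d wv
  have hlamd : lamstar ⬝ᵥ d = -(d ⬝ᵥ Q⁻¹ *ᵥ wv) := by
    rw [hlam, neg_dotProduct, dotProduct_comm]
  have hexp : g v bstar =
      g ustar bstar + lamstar ⬝ᵥ d + (1/2) * (d ⬝ᵥ Q⁻¹ *ᵥ d) := by
    rw [hg, hg, hvec, ← hwv]
    simp only [Matrix.mulVec_sub, dotProduct_sub, sub_dotProduct]
    rw [hlamd]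
    linarith [hsymm]
  have hkey := inv_quad_bound m hm Q hQ γ hγ0 hγlt' d
  have hsum1 : ∑ i, (ustar i - (ustar i - γ * lamstar i)) ^ 2
      = γ^2 * (lamstar ⬝ᵥ lamstar) := by
    simp only [dotProduct, Finset.mul_sum]
    apply Finset.sum_congr rfl
    intro i _; ring
  have hsum2 : ∑ i, (v i - (ustar i - γ * lamstar i)) ^ 2
      = d ⬝ᵥ d + 2 * γ * (lamstar ⬝ᵥ d) + γ^2 * (lamstar ⬝ᵥ lamstar) := by
    simp only [dotProduct, Finset.mul_sum, Pi.sub_apply, hd,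
      ← Finset.sum_add_distrib]
    apply Finset.sum_congr rfl
    intro i _; ring
  have hγne : γ ≠ 0 := ne_of_gt hγ0
  have e1 : (1 / (2 * γ)) * (d ⬝ᵥ d + 2 * γ * (lamstar ⬝ᵥ d) + γ^2 * (lamstar ⬝ᵥ lamstar))
      = (1 / (2 * γ)) * (d ⬝ᵥ d) + lamstar ⬝ᵥ d + (1 / (2 * γ)) * (γ^2 * (lamstar ⬝ᵥ lamstar)) := by
    field_simp
  have e2 : (1 / (2 * γ)) * (d ⬝ᵥ d) = (1/2) * ((1/γ) * (d ⬝ᵥ d)) := by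
    field_simp
  have h1 := hmin v bstar
  rw [hsum1, hsum2, e1]
  linarith
end
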